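/- arXiv:2011.11742 — 2 statements merged into one kernel-verified Lean document; each statement's English description precedes it below -/
import Mathlib

section
/- Let A be an n×n positive matrix with simple Perron eigenvalue λ*, right Perron eigenvector ū and left Perron eigenvector v̄ with (ū, v̄) = 1. If B is a matrix such that (B ū, v̄) = 0, then the equation (A − λ* I) w = −B ū has a solution w, and for any such solution the second-order variation of λ* under the perturbation A + εB is δ²λ* = 2(B w, v̄), i.e. δ²λ* = −2(B (A − λ* I)^{+} B ū, v̄) where (A − λ*I)^{+} denotes an inverse on the complement of span(ū). -/
open Asymptotics Filter

open Matrix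

/-- Second-order perturbation of a simple Perron eigenvalue. If the first-order
term vanishes, `(B u, v) = 0`, then by the Fredholm alternative `(A - λ* I) w = - B u` is
solvable, the value `(B w, v)` is independent of the chosen solution `w`, and the perturbed
Perron eigenvalue satisfies `lamFun ε = λ* + ε² (B w, v) + o(ε²)`. -/
theorem stmt7 {n : ℕ} (A B : Matrix (Fin n) (Fin n) ℝ)
    (hA : ∀ i j, 0 < A i j) (lam : ℝ) (u v : Fin n → ℝ)
    (hlam_pos : 0 < lam)
    (hu : ∀ i, 0 < u i) (hv : ∀ i, 0 < v i)
    (hu_eig : A.mulVec u = lam • u)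
    (hv_eig : A.transpose.mulVec v = lam • v)
    -- simplicity of the Perron eigenvalue, for `A` and its transpose:
    (hsimple : ∀ x : Fin n → ℝ, A.mulVec x = lam • x → ∃ c : ℝ, x = c • u)
    (hsimpleT : ∀ x : Fin n → ℝ, A.transpose.mulVec x = lam • x → ∃ c : ℝ, x = c • v)
    (hnorm : ∑ i, u i * v i = 1)
    -- vanishing of the first-order variation:
    (hfirst : ∑ i, B.mulVec u i * v i = 0)
    (lamFun : ℝ → ℝ) (h0 : lamFun 0 = lam) (hcont : ContinuousAt lamFun 0)
    (heig : ∀ᶠ ε in nhds (0 : ℝ), ∃ w : Fin n → ℝ, (∀ i, 0 < w i) ∧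
      (A + ε • B).mulVec w = lamFun ε • w) :
    -- solvability (Fredholm alternative):
    (∃ w : Fin n → ℝ, (A - lam • (1 : Matrix (Fin n) (Fin n) ℝ)).mulVec w = -(B.mulVec u)) ∧
    -- the second-order coefficient does not depend on the chosen solution:
    (∀ w₁ w₂ : Fin n → ℝ,
      (A - lam • (1 : Matrix (Fin n) (Fin n) ℝ)).mulVec w₁ = -(B.mulVec u) →
      (A - lam • (1 : Matrix (Fin n) (Fin n) ℝ)).mulVec w₂ = -(B.mulVec u) →
      ∑ i, B.mulVec w₁ i * v i = ∑ i, B.mulVec w₂ i * v i) ∧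
    -- second-order expansion `δ²λ* = 2 (B w, v)`, i.e. `λ(ε) = λ* + ε²(Bw,v) + o(ε²)`:
    (∀ w : Fin n → ℝ,
      (A - lam • (1 : Matrix (Fin n) (Fin n) ℝ)).mulVec w = -(B.mulVec u) →
      (fun ε : ℝ => lamFun ε - lam - ε ^ 2 * ∑ i, B.mulVec w i * v i)
        =o[nhds (0 : ℝ)] fun ε => ε ^ 2) := by
  -- dispose of the degenerate case `n = 0`
  rcases Nat.eq_zero_or_pos n with hn | hn
  · subst hn; exact absurd hnorm (by simp)
  haveI : Nonempty (Fin n) := Fin.pos_iff_nonempty.mp hn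
  set M := A - lam • (1 : Matrix (Fin n) (Fin n) ℝ) with hMdef
  have hMu : M *ᵥ u = 0 := by
    rw [hMdef, Matrix.sub_mulVec, Matrix.smul_mulVec, Matrix.one_mulVec, hu_eig, sub_self]
  have hMTv : Mᵀ *ᵥ v = 0 := by
    rw [hMdef, Matrix.transpose_sub, Matrix.transpose_smul, Matrix.transpose_one,
      Matrix.sub_mulVec, Matrix.smul_mulVec, Matrix.one_mulVec, hv_eig, sub_self]
  have hpair : ∀ x, dotProduct (M *ᵥ x) v = 0 := by
    intro x
    rw [dotProduct_comm, dotProduct_mulVec, ← Matrix.mulVec_transpose, hMTv,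
      zero_dotProduct]
  have huv : dotProduct u v = 1 := hnorm
  have hvu : dotProduct v u = 1 := by rw [dotProduct_comm]; exact huv
  have hBuv : dotProduct (B *ᵥ u) v = 0 := hfirst
  have hMker : ∀ x, M *ᵥ x = 0 → ∃ c : ℝ, x = c • u := by
    intro x hx
    apply hsimple
    have hx' : A *ᵥ x - lam • x = 0 := by
      rw [hMdef, Matrix.sub_mulVec, Matrix.smul_mulVec, Matrix.one_mulVec] at hx
      exact hx
    exact sub_eq_zero.mp hx'
  set C : Matrix (Fin n) (Fin n) ℝ := Matrix.vecMulVec u v with hCdef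
  have hC : ∀ x, C *ᵥ x = (dotProduct x v) • u := by
    intro x
    funext i
    simp only [hCdef, Matrix.mulVec, dotProduct, Matrix.vecMulVec_apply, Pi.smul_apply,
      smul_eq_mul]
    rw [Finset.sum_mul]
    exact Finset.sum_congr rfl fun j _ => by ring
  set L := M + C with hLdef
  have hLdet : IsUnit L.det := by
    rw [isUnit_iff_ne_zero]
    intro hdet
    obtain ⟨x, hx0, hxL⟩ := Matrix.exists_mulVec_eq_zero_iff.mpr hdet
    have h1 : dotProduct (L *ᵥ x) v = 0 := by rw [hxL, zero_dotProduct]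
    have h2 : dotProduct x v = 0 := by
      rw [hLdef, Matrix.add_mulVec, hC, add_dotProduct, hpair,
        smul_dotProduct, huv, zero_add, smul_eq_mul, mul_one] at h1
      exact h1
    have h3 : M *ᵥ x = 0 := by
      rw [hLdef, Matrix.add_mulVec, hC, h2, zero_smul, add_zero] at hxL
      exact hxL
    obtain ⟨c, rfl⟩ := hMker x h3
    have hc : c = 0 := by
      rw [smul_dotProduct, huv, smul_eq_mul, mul_one] at h2
      exact h2
    exact hx0 (by rw [hc, zero_smul])
  set N := L⁻¹ with hNdef
  have hNL : N * L = 1 := Matrix.nonsing_inv_mul L hLdet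
  have hLN : L * N = 1 := Matrix.mul_nonsing_inv L hLdet
  have hNLv : ∀ x, N *ᵥ (L *ᵥ x) = x := fun x => by
    rw [Matrix.mulVec_mulVec, hNL, Matrix.one_mulVec]
  have hLNv : ∀ x, L *ᵥ (N *ᵥ x) = x := fun x => by
    rw [Matrix.mulVec_mulVec, hLN, Matrix.one_mulVec]
  have hNu : N *ᵥ u = u := by
    have hLu : L *ᵥ u = u := by
      rw [hLdef, Matrix.add_mulVec, hMu, hC, huv, one_smul, zero_add]
    conv_lhs => rw [← hLu]
    exact hNLv u
  -- pseudo-inverse property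
  have hNv : ∀ y, dotProduct y v = 0 →
      dotProduct (N *ᵥ y) v = 0 ∧ M *ᵥ (N *ᵥ y) = y := by
    intro y hy
    have h1 : M *ᵥ (N *ᵥ y) + (dotProduct (N *ᵥ y) v) • u = y := by
      have h := hLNv y
      rwa [hLdef, Matrix.add_mulVec, hC] at h
    have h2 : dotProduct (N *ᵥ y) v = 0 := by
      have h := congrArg (fun z => dotProduct z v) h1
      simp only [add_dotProduct, hpair, smul_dotProduct, huv, smul_eq_mul,
        mul_one, zero_add, hy] at h
      exact h
    refine ⟨h2, ?_⟩
    rw [h2, zero_smul, add_zero] at h1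
    exact h1
  obtain ⟨hz0v, hz0M⟩ := hNv (B *ᵥ u) hBuv
  set w₀ : Fin n → ℝ := -(N *ᵥ (B *ᵥ u)) with hw₀def
  have hw₀ : M *ᵥ w₀ = -(B *ᵥ u) := by rw [hw₀def, Matrix.mulVec_neg, hz0M]
  -- independence of the coefficient
  have key : ∀ w₁ w₂ : Fin n → ℝ, M *ᵥ w₁ = -(B *ᵥ u) → M *ᵥ w₂ = -(B *ᵥ u) →
      dotProduct (B *ᵥ w₁) v = dotProduct (B *ᵥ w₂) v := by
    intro w₁ w₂ h1 h2
    have hd : M *ᵥ (w₁ - w₂) = 0 := by rw [Matrix.mulVec_sub, h1, h2, sub_self]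
    obtain ⟨c, hc⟩ := hMker _ hd
    have hB : dotProduct (B *ᵥ (w₁ - w₂)) v = 0 := by
      rw [hc, Matrix.mulVec_smul, smul_dotProduct, hBuv, smul_eq_mul, mul_zero]
    rw [Matrix.mulVec_sub, sub_dotProduct, sub_eq_zero] at hB
    exact hB
  refine ⟨⟨w₀, hw₀⟩, fun w₁ w₂ h1 h2 => key w₁ w₂ h1 h2, ?_⟩
  -- the asymptotic expansion
  intro w hw
  set c₀ : ℝ := dotProduct (B *ᵥ w₀) v with hc₀def
  have hcw : (∑ i, B.mulVec w i * v i) = c₀ := key w w₀ hw hw₀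
  rw [hcw]
  -- norm bounds
  obtain ⟨cN, hcN0, hNb⟩ : ∃ c : ℝ, 0 ≤ c ∧ ∀ z : Fin n → ℝ, ‖N *ᵥ z‖ ≤ c * ‖z‖ :=
    ⟨_, norm_nonneg _, fun z => by
      simpa [Matrix.mulVecLin_apply, LinearMap.coe_toContinuousLinearMap'] using
        (LinearMap.toContinuousLinearMap (Matrix.mulVecLin N)).le_opNorm z⟩
  obtain ⟨cB, hcB0, hBb⟩ : ∃ c : ℝ, 0 ≤ c ∧ ∀ z : Fin n → ℝ, ‖B *ᵥ z‖ ≤ c * ‖z‖ :=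
    ⟨_, norm_nonneg _, fun z => by
      simpa [Matrix.mulVecLin_apply, LinearMap.coe_toContinuousLinearMap'] using
        (LinearMap.toContinuousLinearMap (Matrix.mulVecLin B)).le_opNorm z⟩
  set Kv : ℝ := ∑ i, |v i| with hKvdef
  have hKv0 : 0 ≤ Kv := by rw [hKvdef]; positivity
  have hvd : ∀ z : Fin n → ℝ, |dotProduct z v| ≤ Kv * ‖z‖ := by
    intro z
    have h0' : dotProduct z v = ∑ i, z i * v i := rfl
    rw [h0']
    calc |∑ i, z i * v i| ≤ ∑ i, |z i * v i| := Finset.abs_sum_le_sum_abs _ _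
      _ = ∑ i, |v i| * |z i| := Finset.sum_congr rfl fun i _ => by rw [abs_mul, mul_comm]
      _ ≤ ∑ i, |v i| * ‖z‖ := Finset.sum_le_sum fun i _ =>
          mul_le_mul_of_nonneg_left (by simpa [Real.norm_eq_abs] using norm_le_pi_norm z i)
            (abs_nonneg _)
      _ = Kv * ‖z‖ := by rw [hKvdef, Finset.sum_mul]
  have hfb : ∀ z : Fin n → ℝ, |dotProduct (B *ᵥ z) v| ≤ Kv * (cB * ‖z‖) := fun z =>
    (hvd (B *ᵥ z)).trans (mul_le_mul_of_nonneg_left (hBb z) hKv0)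
  set a : ℝ := ‖N *ᵥ (B *ᵥ u)‖ with hadef
  have ha0 : 0 ≤ a := by rw [hadef]; positivity
  set Dx : ℝ := ∑ i, |(v i)⁻¹| with hDxdef
  have hDx0 : 0 ≤ Dx := by rw [hDxdef]; positivity
  set D : ℝ := Dx + ‖u‖ with hDdef
  have hD0 : 0 ≤ D := by rw [hDdef]; exact add_nonneg hDx0 (norm_nonneg u)
  set C₁ : ℝ := (Kv * (cB * D)) * ‖u‖ + (Kv * (cB * D)) * (cN * D) + a + cN * (cB * D)
    with hC₁def
  have hC₁0 : 0 ≤ C₁ := by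
    rw [hC₁def]
    have e1 : 0 ≤ Kv * (cB * D) := mul_nonneg hKv0 (mul_nonneg hcB0 hD0)
    exact add_nonneg (add_nonneg (add_nonneg (mul_nonneg e1 (norm_nonneg u))
      (mul_nonneg e1 (mul_nonneg hcN0 hD0))) ha0) (mul_nonneg hcN0 (mul_nonneg hcB0 hD0))
  set C₂ : ℝ := (Kv * (cB * C₁)) * ‖u‖ + (Kv * (cB * C₁)) * (cN * D) + cN * (cB * C₁)
    with hC₂def
  refine Asymptotics.IsBigO.trans_isLittleO (g := fun ε : ℝ => ε ^ 3)
      (Asymptotics.IsBigO.of_bound (Kv * (cB * C₂)) ?_) ?_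
  · -- the eventual bound
    filter_upwards [heig] with ε hε
    obtain ⟨W, hWpos, hWeig⟩ := hε
    set s : ℝ := dotProduct W v with hsdef
    have hs : 0 < s := by
      rw [hsdef]
      exact Finset.sum_pos (fun i _ => mul_pos (hWpos i) (hv i)) Finset.univ_nonempty
    set x : Fin n → ℝ := s⁻¹ • W with hxdef
    have hxpos : ∀ i, 0 < x i := by
      intro i
      simp only [hxdef, Pi.smul_apply, smul_eq_mul]
      exact mul_pos (inv_pos.mpr hs) (hWpos i)
    have hxv : dotProduct x v = 1 := by
      rw [hxdef, smul_dotProduct, ← hsdef, smul_eq_mul, inv_mul_cancel₀ hs.ne']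
    have hxb : ‖x‖ ≤ Dx := by
      refine (pi_norm_le_iff_of_nonneg hDx0).mpr fun i => ?_
      rw [Real.norm_eq_abs, abs_of_pos (hxpos i)]
      have h1 : x i * v i ≤ 1 := by
        have h2 : x i * v i ≤ ∑ j, x j * v j := Finset.single_le_sum
          (fun j _ => le_of_lt (mul_pos (hxpos j) (hv j))) (Finset.mem_univ i)
        have hsum : ∑ j, x j * v j = 1 := hxv
        linarith
      calc x i ≤ 1 / v i := (le_div_iff₀ (hv i)).mpr h1
        _ = (v i)⁻¹ := one_div _
        _ ≤ |(v i)⁻¹| := le_abs_self _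
        _ ≤ Dx := by
            rw [hDxdef]
            exact Finset.single_le_sum (f := fun j => |(v j)⁻¹|)
              (fun j _ => abs_nonneg _) (Finset.mem_univ i)
    set r : Fin n → ℝ := x - u with hrdef
    have hxr : x = u + r := by rw [hrdef]; abel
    have hrv : dotProduct r v = 0 := by
      rw [hrdef, sub_dotProduct, hxv, huv, sub_self]
    have hnr : ‖r‖ ≤ D := by
      rw [hrdef, hDdef]
      exact (norm_sub_le x u).trans (add_le_add_left hxb _)
    have heq : (A + ε • B) *ᵥ x = lamFun ε • x := by
      rw [hxdef, Matrix.mulVec_smul, hWeig, smul_comm]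
    set μ : ℝ := lamFun ε - lam with hμdef
    have hAxv : dotProduct (A *ᵥ x) v = lam := by
      rw [dotProduct_comm, dotProduct_mulVec, ← Matrix.mulVec_transpose, hv_eig,
        smul_dotProduct, dotProduct_comm v x, hxv, smul_eq_mul, mul_one]
    have hpε := congrArg (fun z => dotProduct z v) heq
    simp only [Matrix.add_mulVec, Matrix.smul_mulVec, add_dotProduct,
      smul_dotProduct, smul_eq_mul] at hpε
    rw [hAxv, hxv, mul_one] at hpε
    have hBx : dotProduct (B *ᵥ x) v = dotProduct (B *ᵥ r) v := by
      conv_lhs => rw [hxr]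
      rw [Matrix.mulVec_add, add_dotProduct, hBuv, zero_add]
    have hμ : μ = ε * dotProduct (B *ᵥ r) v := by
      rw [hμdef, ← hpε, hBx]; ring
    have hlf : lamFun ε = lam + μ := by rw [hμdef]; ring
    have hAx : A *ᵥ x = lamFun ε • x - ε • (B *ᵥ x) := by
      have h := heq
      rw [Matrix.add_mulVec, Matrix.smul_mulVec] at h
      exact eq_sub_of_add_eq h
    have hAr : A *ᵥ r = A *ᵥ x - lam • u := by
      rw [hrdef, Matrix.mulVec_sub, hu_eig]
    have hMr : M *ᵥ r = μ • u + μ • r - ε • (B *ᵥ u) - ε • (B *ᵥ r) := by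
      have step : M *ᵥ r = A *ᵥ r - lam • r := by
        rw [hMdef, Matrix.sub_mulVec, Matrix.smul_mulVec, Matrix.one_mulVec]
      rw [step, hAr, hAx, hlf, hxr, Matrix.mulVec_add, add_smul, smul_add, smul_add, smul_add]
      abel
    have hLr : L *ᵥ r = M *ᵥ r := by
      rw [hLdef, Matrix.add_mulVec, hC, hrv, zero_smul, add_zero]
    have e1 : N *ᵥ (M *ᵥ r) = r := by rw [← hLr]; exact hNLv r
    have hrN : r = μ • u + μ • (N *ᵥ r) - ε • (N *ᵥ (B *ᵥ u)) - ε • (N *ᵥ (B *ᵥ r)) := by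
      calc r = N *ᵥ (M *ᵥ r) := e1.symm
        _ = N *ᵥ (μ • u + μ • r - ε • (B *ᵥ u) - ε • (B *ᵥ r)) := by rw [hMr]
        _ = μ • (N *ᵥ u) + μ • (N *ᵥ r) - ε • (N *ᵥ (B *ᵥ u)) - ε • (N *ᵥ (B *ᵥ r)) := by
            rw [Matrix.mulVec_sub, Matrix.mulVec_sub, Matrix.mulVec_add, Matrix.mulVec_smul,
              Matrix.mulVec_smul, Matrix.mulVec_smul, Matrix.mulVec_smul]
        _ = μ • u + μ • (N *ᵥ r) - ε • (N *ᵥ (B *ᵥ u)) - ε • (N *ᵥ (B *ᵥ r)) := by rw [hNu]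
    -- basic scalar bounds
    have hμb : |μ| ≤ |ε| * (Kv * (cB * ‖r‖)) := by
      rw [hμ, abs_mul]
      exact mul_le_mul_of_nonneg_left (hfb r) (abs_nonneg ε)
    have htri : ∀ p q c d : Fin n → ℝ, ‖p + q - c - d‖ ≤ ‖p‖ + ‖q‖ + ‖c‖ + ‖d‖ := by
      intro p q c d
      calc ‖p + q - c - d‖ ≤ ‖p + q - c‖ + ‖d‖ := norm_sub_le _ _
        _ ≤ (‖p + q‖ + ‖c‖) + ‖d‖ := add_le_add_left (norm_sub_le _ _) _
        _ ≤ (‖p‖ + ‖q‖ + ‖c‖) + ‖d‖ := by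
            have := norm_add_le p q; linarith
    have h4 : ‖r‖ ≤ |μ| * ‖u‖ + |μ| * (cN * ‖r‖) + |ε| * a + |ε| * (cN * (cB * ‖r‖)) := by
      calc ‖r‖ = ‖μ • u + μ • (N *ᵥ r) - ε • (N *ᵥ (B *ᵥ u)) - ε • (N *ᵥ (B *ᵥ r))‖ :=
            congrArg norm hrN
        _ ≤ ‖μ • u‖ + ‖μ • (N *ᵥ r)‖ + ‖ε • (N *ᵥ (B *ᵥ u))‖ + ‖ε • (N *ᵥ (B *ᵥ r))‖ :=
            htri _ _ _ _
        _ ≤ |μ| * ‖u‖ + |μ| * (cN * ‖r‖) + |ε| * a + |ε| * (cN * (cB * ‖r‖)) := by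
            rw [norm_smul, norm_smul, norm_smul, norm_smul, Real.norm_eq_abs, Real.norm_eq_abs]
            have b1 := mul_le_mul_of_nonneg_left (hNb r) (abs_nonneg μ)
            have b2 : ‖N *ᵥ (B *ᵥ u)‖ = a := by rw [hadef]
            have b3 : ‖N *ᵥ (B *ᵥ r)‖ ≤ cN * (cB * ‖r‖) :=
              (hNb _).trans (mul_le_mul_of_nonneg_left (hBb r) hcN0)
            have b4 := mul_le_mul_of_nonneg_left b3 (abs_nonneg ε)
            rw [b2]
            linarith
    have hμD : |μ| ≤ |ε| * (Kv * (cB * D)) :=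
      hμb.trans (mul_le_mul_of_nonneg_left
        (mul_le_mul_of_nonneg_left (mul_le_mul_of_nonneg_left hnr hcB0) hKv0) (abs_nonneg ε))
    have hr1 : ‖r‖ ≤ |ε| * C₁ := by
      have t1 : |μ| * ‖u‖ ≤ (|ε| * (Kv * (cB * D))) * ‖u‖ :=
        mul_le_mul_of_nonneg_right hμD (norm_nonneg u)
      have t2 : |μ| * (cN * ‖r‖) ≤ (|ε| * (Kv * (cB * D))) * (cN * D) :=
        mul_le_mul hμD (mul_le_mul_of_nonneg_left hnr hcN0)
          (mul_nonneg hcN0 (norm_nonneg r))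
          (mul_nonneg (abs_nonneg ε) (mul_nonneg hKv0 (mul_nonneg hcB0 hD0)))
      have t4 : |ε| * (cN * (cB * ‖r‖)) ≤ |ε| * (cN * (cB * D)) :=
        mul_le_mul_of_nonneg_left
          (mul_le_mul_of_nonneg_left (mul_le_mul_of_nonneg_left hnr hcB0) hcN0) (abs_nonneg ε)
      calc ‖r‖ ≤ |μ| * ‖u‖ + |μ| * (cN * ‖r‖) + |ε| * a + |ε| * (cN * (cB * ‖r‖)) := h4
        _ ≤ (|ε| * (Kv * (cB * D))) * ‖u‖ + (|ε| * (Kv * (cB * D))) * (cN * D) + |ε| * a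
              + |ε| * (cN * (cB * D)) := by linarith
        _ = |ε| * C₁ := by rw [hC₁def]; ring
    have hμ2 : |μ| ≤ |ε| ^ 2 * (Kv * (cB * C₁)) := by
      have h := hμb.trans (mul_le_mul_of_nonneg_left
        (mul_le_mul_of_nonneg_left (mul_le_mul_of_nonneg_left hr1 hcB0) hKv0) (abs_nonneg ε))
      calc |μ| ≤ |ε| * (Kv * (cB * (|ε| * C₁))) := h
        _ = |ε| ^ 2 * (Kv * (cB * C₁)) := by ring
    -- decomposition of `r - ε • w₀`
    have hdecomp : r - ε • w₀ = μ • u + μ • (N *ᵥ r) - ε • (N *ᵥ (B *ᵥ r)) := by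
      have h1 : r - ε • w₀ = r + ε • (N *ᵥ (B *ᵥ u)) := by
        rw [hw₀def, smul_neg, sub_neg_eq_add]
      rw [h1]
      conv_lhs => rw [hrN]
      abel
    have h3 : ‖r - ε • w₀‖ ≤ |μ| * ‖u‖ + |μ| * (cN * ‖r‖) + |ε| * (cN * (cB * ‖r‖)) := by
      calc ‖r - ε • w₀‖ = ‖μ • u + μ • (N *ᵥ r) - ε • (N *ᵥ (B *ᵥ r))‖ := by rw [hdecomp]
        _ ≤ ‖μ • u + μ • (N *ᵥ r)‖ + ‖ε • (N *ᵥ (B *ᵥ r))‖ := norm_sub_le _ _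
        _ ≤ ‖μ • u‖ + ‖μ • (N *ᵥ r)‖ + ‖ε • (N *ᵥ (B *ᵥ r))‖ :=
            add_le_add_left (norm_add_le _ _) _
        _ ≤ |μ| * ‖u‖ + |μ| * (cN * ‖r‖) + |ε| * (cN * (cB * ‖r‖)) := by
            rw [norm_smul, norm_smul, norm_smul, Real.norm_eq_abs, Real.norm_eq_abs]
            have b1 := mul_le_mul_of_nonneg_left (hNb r) (abs_nonneg μ)
            have b3 : ‖N *ᵥ (B *ᵥ r)‖ ≤ cN * (cB * ‖r‖) :=
              (hNb _).trans (mul_le_mul_of_nonneg_left (hBb r) hcN0)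
            have b4 := mul_le_mul_of_nonneg_left b3 (abs_nonneg ε)
            linarith
    have hr2 : ‖r - ε • w₀‖ ≤ |ε| ^ 2 * C₂ := by
      have t1 : |μ| * ‖u‖ ≤ (|ε| ^ 2 * (Kv * (cB * C₁))) * ‖u‖ :=
        mul_le_mul_of_nonneg_right hμ2 (norm_nonneg u)
      have t2 : |μ| * (cN * ‖r‖) ≤ (|ε| ^ 2 * (Kv * (cB * C₁))) * (cN * D) :=
        mul_le_mul hμ2 (mul_le_mul_of_nonneg_left hnr hcN0)
          (mul_nonneg hcN0 (norm_nonneg r))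
          (mul_nonneg (pow_nonneg (abs_nonneg ε) 2)
            (mul_nonneg hKv0 (mul_nonneg hcB0 hC₁0)))
      have t3 : |ε| * (cN * (cB * ‖r‖)) ≤ |ε| * (cN * (cB * (|ε| * C₁))) :=
        mul_le_mul_of_nonneg_left
          (mul_le_mul_of_nonneg_left (mul_le_mul_of_nonneg_left hr1 hcB0) hcN0) (abs_nonneg ε)
      have t3' : |ε| * (cN * (cB * (|ε| * C₁))) = |ε| ^ 2 * (cN * (cB * C₁)) := by ring
      calc ‖r - ε • w₀‖ ≤ |μ| * ‖u‖ + |μ| * (cN * ‖r‖) + |ε| * (cN * (cB * ‖r‖)) := h3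
        _ ≤ (|ε| ^ 2 * (Kv * (cB * C₁))) * ‖u‖ + (|ε| ^ 2 * (Kv * (cB * C₁))) * (cN * D)
              + |ε| ^ 2 * (cN * (cB * C₁)) := by
            rw [← t3']; linarith
        _ = |ε| ^ 2 * C₂ := by rw [hC₂def]; ring
    -- conclude
    have hdiff : μ - ε ^ 2 * c₀ = ε * dotProduct (B *ᵥ (r - ε • w₀)) v := by
      rw [Matrix.mulVec_sub, Matrix.mulVec_smul, sub_dotProduct, smul_dotProduct,
        smul_eq_mul, ← hc₀def, hμ]
      ring
    simp only [Real.norm_eq_abs, abs_pow]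
    calc |μ - ε ^ 2 * c₀| = |ε| * |dotProduct (B *ᵥ (r - ε • w₀)) v| := by
          rw [hdiff, abs_mul]
      _ ≤ |ε| * (Kv * (cB * ‖r - ε • w₀‖)) :=
          mul_le_mul_of_nonneg_left (hfb _) (abs_nonneg ε)
      _ ≤ |ε| * (Kv * (cB * (|ε| ^ 2 * C₂))) :=
          mul_le_mul_of_nonneg_left
            (mul_le_mul_of_nonneg_left (mul_le_mul_of_nonneg_left hr2 hcB0) hKv0) (abs_nonneg ε)
      _ = Kv * (cB * C₂) * |ε| ^ 3 := by ring
  · -- `ε³ = o(ε²)` near `0`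
    have h1 : (fun ε : ℝ => ε) =o[nhds (0 : ℝ)] fun _ => (1 : ℝ) :=
      (Asymptotics.isLittleO_one_iff ℝ).mpr tendsto_id
    have h2 := h1.mul_isBigO (Asymptotics.isBigO_refl (fun ε : ℝ => ε ^ 2) (nhds 0))
    exact h2.congr (fun x => by ring) (fun x => by ring)
end

section
/- Let A be a positive n×n matrix with Perron eigenvalue λ* > 1 and γ > 0. Then there exists a unique ū ∈ ℝⁿ with strictly positive entries satisfying A ū = e^{γ S(ū)} ū, namely ū = (γ⁻¹ ln λ* / S(w)) · w, where w is any positive Perron eigenvector of A and S denotes coordinate sum. -/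
/-- For a positive matrix `A` with simple Perron eigenvalue `λ* > 1` and
`γ > 0`, there is a unique strictly positive solution of `A ū = e^{γ S(ū)} ū`, namely the
Perron eigenvector `w` rescaled so that its coordinate sum is `γ⁻¹ ln λ*`. -/
theorem stmt11 {n : ℕ} (hn : 0 < n) (A : Matrix (Fin n) (Fin n) ℝ)
    (hA : ∀ i j, 0 < A i j) (γ lam : ℝ) (hγ : 0 < γ) (hlam : 1 < lam)
    (w : Fin n → ℝ) (hw : ∀ i, 0 < w i) (hw_eig : A.mulVec w = lam • w)
    -- Perron–Frobenius: `lam` is simple and is the only eigenvalue with a positive eigenvector: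
    (hsimple : ∀ x : Fin n → ℝ, A.mulVec x = lam • x → ∃ c : ℝ, x = c • w)
    (hunique_eig : ∀ (μ : ℝ) (x : Fin n → ℝ), (∀ i, 0 < x i) → A.mulVec x = μ • x → μ = lam) :
    (∀ i, 0 < (((γ⁻¹ * Real.log lam) / ∑ j, w j) • w) i) ∧
    A.mulVec (((γ⁻¹ * Real.log lam) / ∑ j, w j) • w) =
      Real.exp (γ * ∑ i, (((γ⁻¹ * Real.log lam) / ∑ j, w j) • w) i) •
        (((γ⁻¹ * Real.log lam) / ∑ j, w j) • w) ∧
    (∀ u : Fin n → ℝ, (∀ i, 0 < u i) → A.mulVec u = Real.exp (γ * ∑ i, u i) • u →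
      u = ((γ⁻¹ * Real.log lam) / ∑ j, w j) • w) := by
  have hSw : 0 < ∑ j, w j :=
    Finset.sum_pos (fun j _ => hw j) (Finset.univ_nonempty_iff.2 ⟨⟨0, hn⟩⟩)
  have hlog : 0 < Real.log lam := Real.log_pos hlam
  set c : ℝ := (γ⁻¹ * Real.log lam) / ∑ j, w j with hc
  have hcpos : 0 < c := div_pos (mul_pos (inv_pos.2 hγ) hlog) hSw
  have hsum : γ * ∑ i, (c • w) i = Real.log lam := by
    simp only [Pi.smul_apply, smul_eq_mul, ← Finset.mul_sum]
    rw [hc]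
    field_simp [hγ.ne', hSw.ne']
  have hexp : Real.exp (γ * ∑ i, (c • w) i) = lam := by
    rw [hsum, Real.exp_log (by linarith)]
  refine ⟨fun i => by simpa using mul_pos hcpos (hw i), ?_, ?_⟩
  · rw [hexp, Matrix.mulVec_smul, hw_eig, smul_comm]
  · intro u hu hu_eq
    have hμ : Real.exp (γ * ∑ i, u i) = lam := hunique_eig _ u hu hu_eq
    obtain ⟨d, hd⟩ := hsimple u (by rw [hu_eq, hμ])
    have hdpos : 0 < d := by
      have := hu ⟨0, hn⟩
      rw [hd] at this
      simp only [Pi.smul_apply, smul_eq_mul] at this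
      nlinarith [hw ⟨0, hn⟩]
    have hdsum : γ * (d * ∑ j, w j) = Real.log lam := by
      have := congrArg Real.log hμ
      rw [Real.log_exp] at this
      rw [← this, hd]
      simp [Finset.mul_sum, mul_comm]
    have : d = c := by
      rw [hc]
      field_simp
      nlinarith [hdsum]
    rw [hd, this]
end
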